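/- Let S be a finite set and for each n let ρ_n be a symmetric probability measure on S^n, and suppose the two-dimensional marginals ρ_n^{(2)} converge to the product measure ρ⊗ρ for some probability measure ρ on S. Then for every k, the k-dimensional marginals ρ_n^{(k)} converge to ρ^{⊗k}, i.e., (ρ_n) is ρ-chaotic. -/

import Mathlib

open Finset Filter Topology

set_option linter.unusedSectionVars false
set_option maxHeartbeats 1000000

section chaosAux

variable {S : Type*} [Fintype S] [DecidableEq S]

def pInd {n k : ℕ} (i : Fin k → Fin n) (x : Fin k → S) (y : Fin n → S) : ℝ :=
  ∏ r : Fin k, if y (i r) = x r then 1 else 0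

/-- number of coordinates of `y` equal to `s`, as a real. -/

def cnt {n : ℕ} (s : S) (y : Fin n → S) : ℝ :=
  ∑ m : Fin n, if y m = s then 1 else 0

def Mg (p : (n : ℕ) → (Fin n → S) → ℝ) (k n : ℕ) (x : Fin k → S) : ℝ :=
  ∑ y ∈ univ.filter
      (fun y : Fin n → S => ∀ i : Fin n, (h : (i : ℕ) < k) → y i = x ⟨i, h⟩), p n y

lemma pInd_eq_ite {n k : ℕ} (i : Fin k → Fin n) (x : Fin k → S) (y : Fin n → S) :
    pInd i x y = if ∀ r, y (i r) = x r then 1 else 0 := by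
  classical
  rw [pInd, Finset.prod_boole]
  simp

lemma pInd_nonneg {n k : ℕ} (i : Fin k → Fin n) (x : Fin k → S) (y : Fin n → S) :
    0 ≤ pInd i x y := by
  rw [pInd_eq_ite]; split <;> norm_num

lemma pInd_le_one {n k : ℕ} (i : Fin k → Fin n) (x : Fin k → S) (y : Fin n → S) :
    pInd i x y ≤ 1 := by
  rw [pInd_eq_ite]; split <;> norm_num

lemma sum_pInd {n k : ℕ} (x : Fin k → S) (y : Fin n → S) :
    ∑ i : Fin k → Fin n, pInd i x y = ∏ r : Fin k, cnt (x r) y := by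
  classical
  unfold pInd cnt
  rw [Finset.prod_univ_sum]
  rw [Fintype.piFinset_univ]

lemma exists_perm_comp {k n : ℕ} {i j : Fin k → Fin n}
    (hi : Function.Injective i) (hj : Function.Injective j) :
    ∃ π : Equiv.Perm (Fin n), ∀ r, π (j r) = i r := by
  classical
  let e : {x // x ∈ Set.range j} ≃ {x // x ∈ Set.range i} :=
    (Equiv.ofInjective j hj).symm.trans (Equiv.ofInjective i hi)
  refine ⟨e.extendSubtype, fun r => ?_⟩
  rw [Equiv.extendSubtype_apply_of_mem e (j r) ⟨r, rfl⟩]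
  have h1 : (Equiv.ofInjective j hj).symm ⟨j r, ⟨r, rfl⟩⟩ = r := by
    rw [Equiv.symm_apply_eq, Equiv.ofInjective_apply]
  show ((Equiv.ofInjective i hi) ((Equiv.ofInjective j hj).symm ⟨j r, ⟨r, rfl⟩⟩) : Fin n) = i r
  rw [h1, Equiv.ofInjective_apply]


lemma Ex_pInd_eq {p : (n : ℕ) → (Fin n → S) → ℝ}
    (hsym : ∀ n (π : Equiv.Perm (Fin n)) (x : Fin n → S), p n (x ∘ π) = p n x)
    {n k : ℕ} {i j : Fin k → Fin n} (hi : Function.Injective i) (hj : Function.Injective j)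
    (x : Fin k → S) :
    ∑ y : Fin n → S, p n y * pInd i x y = ∑ y : Fin n → S, p n y * pInd j x y := by
  obtain ⟨π, hπ⟩ := exists_perm_comp hi hj
  refine Fintype.sum_equiv (Equiv.arrowCongr π.symm (Equiv.refl S)) _ _ fun y => ?_
  have hp : p n (y ∘ π) = p n y := hsym n π y
  have hA : pInd j x (y ∘ π) = pInd i x y := by
    unfold pInd
    refine Finset.prod_congr rfl fun r _ => ?_
    simp [Function.comp, hπ r]
  show p n y * pInd i x y = p n (y ∘ π) * pInd j x (y ∘ π)
  rw [hp, hA]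

lemma marg_eq (p : (n : ℕ) → (Fin n → S) → ℝ) {n k : ℕ} (hkn : k ≤ n) (x : Fin k → S) :
    ∑ y ∈ univ.filter
        (fun y : Fin n → S => ∀ i : Fin n, (h : (i : ℕ) < k) → y i = x ⟨i, h⟩), p n y
      = ∑ y : Fin n → S, p n y * pInd (Fin.castLE hkn) x y := by
  rw [Finset.sum_filter]
  refine Finset.sum_congr rfl fun y _ => ?_
  rw [pInd_eq_ite]
  by_cases h : ∀ r : Fin k, y (Fin.castLE hkn r) = x r
  · rw [if_pos, if_pos h, mul_one]
    intro i hi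
    exact h ⟨i, hi⟩
  · rw [if_neg, if_neg h, mul_zero]
    intro hP
    exact h fun r => hP (Fin.castLE hkn r) r.2

lemma card_inj (k n : ℕ) :
    (univ.filter (fun i : Fin k → Fin n => Function.Injective i)).card = n.descFactorial k := by
  classical
  rw [← Fintype.card_subtype]
  rw [Fintype.card_congr (Equiv.subtypeInjectiveEquivEmbedding (Fin k) (Fin n))]
  simp [Fintype.card_embedding_eq]

lemma descFactorial_ratio (k : ℕ) :
    Tendsto (fun n : ℕ => (n.descFactorial k : ℝ) / (n : ℝ) ^ k) atTop (𝓝 1) := by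
  have h : ∀ᶠ n : ℕ in atTop, (n.descFactorial k : ℝ) / (n : ℝ) ^ k
      = ∏ i ∈ range k, (1 - (i : ℝ) * (1 / (n : ℝ))) := by
    filter_upwards [eventually_ge_atTop (max k 1)] with n hn
    have hn1 : (1 : ℕ) ≤ n := le_trans (le_max_right _ _) hn
    have hnk : k ≤ n := le_trans (le_max_left _ _) hn
    have hn0 : (n : ℝ) ≠ 0 := by
      simpa using Nat.one_le_iff_ne_zero.mp hn1
    rw [Nat.descFactorial_eq_prod_range]
    push_cast
    rw [show ((n : ℝ)) ^ k = ∏ _i ∈ range k, (n : ℝ) by simp, ← Finset.prod_div_distrib]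
    refine Finset.prod_congr rfl fun i hi => ?_
    rw [Finset.mem_range] at hi
    rw [Nat.cast_sub (le_of_lt (lt_of_lt_of_le hi hnk))]
    field_simp
  have h2 : Tendsto (fun n : ℕ => ∏ i ∈ range k, (1 - (i : ℝ) * (1 / (n : ℝ)))) atTop
      (𝓝 (∏ _i ∈ range k, (1 : ℝ))) := by
    refine tendsto_finset_prod _ fun i _ => ?_
    have : Tendsto (fun n : ℕ => 1 / (n : ℝ)) atTop (𝓝 0) := tendsto_one_div_atTop_nhds_zero_nat
    have h3 : Tendsto (fun n : ℕ => 1 - (i : ℝ) * (1 / (n : ℝ))) atTop (𝓝 (1 - i * 0)) :=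
      tendsto_const_nhds.sub (tendsto_const_nhds.mul this)
    simpa using h3
  simp only [Finset.prod_const_one] at h2
  exact h2.congr' (by filter_upwards [h] with n hn using hn.symm)

lemma abs_prod_sub_prod_le {ι : Type*} [DecidableEq ι] (t : Finset ι) (a b : ι → ℝ)
    (ha : ∀ i, 0 ≤ a i) (ha1 : ∀ i, a i ≤ 1) (hb : ∀ i, 0 ≤ b i) (hb1 : ∀ i, b i ≤ 1) :
    |∏ i ∈ t, a i - ∏ i ∈ t, b i| ≤ ∑ i ∈ t, |a i - b i| := by
  induction t using Finset.cons_induction with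
  | empty => simp
  | cons c t hc ih =>
      rw [Finset.prod_cons, Finset.prod_cons, Finset.sum_cons]
      have key : a c * ∏ i ∈ t, a i - b c * ∏ i ∈ t, b i
          = a c * (∏ i ∈ t, a i - ∏ i ∈ t, b i) + (a c - b c) * ∏ i ∈ t, b i := by ring
      rw [key]
      refine le_trans (abs_add_le _ _) ?_
      rw [abs_mul, abs_mul]
      have h1 : |a c| ≤ 1 := by rw [abs_of_nonneg (ha c)]; exact ha1 c
      have h2 : |∏ i ∈ t, b i| ≤ 1 := by
        rw [abs_of_nonneg (Finset.prod_nonneg fun i _ => hb i)]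
        exact Finset.prod_le_one (fun i _ => hb i) (fun i _ => hb1 i)
      have := mul_le_mul h1 (le_refl |∏ i ∈ t, a i - ∏ i ∈ t, b i|) (abs_nonneg _) zero_le_one
      calc |a c| * |∏ i ∈ t, a i - ∏ i ∈ t, b i| + |a c - b c| * |∏ i ∈ t, b i|
          ≤ 1 * |∏ i ∈ t, a i - ∏ i ∈ t, b i| + |a c - b c| * 1 := by
            gcongr
        _ = |∏ i ∈ t, a i - ∏ i ∈ t, b i| + |a c - b c| := by ring
        _ ≤ (∑ i ∈ t, |a i - b i|) + |a c - b c| := by gcongr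
        _ = |a c - b c| + ∑ i ∈ t, |a i - b i| := by ring

lemma Ex_pInd_eq_Mg {p : (n : ℕ) → (Fin n → S) → ℝ}
    (hsym : ∀ n (π : Equiv.Perm (Fin n)) (x : Fin n → S), p n (x ∘ π) = p n x)
    {n k : ℕ} (hkn : k ≤ n) {i : Fin k → Fin n} (hi : Function.Injective i) (x : Fin k → S) :
    ∑ y : Fin n → S, p n y * pInd i x y = Mg p k n x := by
  rw [Mg, marg_eq p hkn x]
  exact Ex_pInd_eq hsym hi (Fin.strictMono_castLE hkn).injective x

-- L2

lemma Ex_pInd_nonneg {p : (n : ℕ) → (Fin n → S) → ℝ}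
    (hnonneg : ∀ n x, 0 ≤ p n x) {n k : ℕ} (i : Fin k → Fin n) (x : Fin k → S) :
    0 ≤ ∑ y : Fin n → S, p n y * pInd i x y :=
  Finset.sum_nonneg fun y _ => mul_nonneg (hnonneg n y) (pInd_nonneg i x y)

lemma Ex_pInd_le_one {p : (n : ℕ) → (Fin n → S) → ℝ}
    (hnonneg : ∀ n x, 0 ≤ p n x) (hsum : ∀ n, ∑ x : Fin n → S, p n x = 1)
    {n k : ℕ} (i : Fin k → Fin n) (x : Fin k → S) :
    ∑ y : Fin n → S, p n y * pInd i x y ≤ 1 := by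
  calc ∑ y : Fin n → S, p n y * pInd i x y ≤ ∑ y : Fin n → S, p n y := by
        refine Finset.sum_le_sum fun y _ => ?_
        calc p n y * pInd i x y ≤ p n y * 1 :=
              mul_le_mul_of_nonneg_left (pInd_le_one i x y) (hnonneg n y)
          _ = p n y := mul_one _
    _ = 1 := hsum n

lemma Mg_nonneg {p : (n : ℕ) → (Fin n → S) → ℝ} (hnonneg : ∀ n x, 0 ≤ p n x)
    {k n : ℕ} (x : Fin k → S) : 0 ≤ Mg p k n x :=
  Finset.sum_nonneg fun y _ => hnonneg n y

lemma Mg_le_one {p : (n : ℕ) → (Fin n → S) → ℝ} (hnonneg : ∀ n x, 0 ≤ p n x)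
    (hsum : ∀ n, ∑ x : Fin n → S, p n x = 1) {k n : ℕ} (x : Fin k → S) :
    Mg p k n x ≤ 1 := by
  rw [Mg]
  calc ∑ y ∈ _, p n y ≤ ∑ y : Fin n → S, p n y :=
        Finset.sum_le_sum_of_subset_of_nonneg (Finset.filter_subset _ _)
          (fun y _ _ => hnonneg n y)
    _ = 1 := hsum n

-- L3

lemma key_split {p : (n : ℕ) → (Fin n → S) → ℝ}
    (hnonneg : ∀ n x, 0 ≤ p n x) (hsum : ∀ n, ∑ x : Fin n → S, p n x = 1)
    (hsym : ∀ n (π : Equiv.Perm (Fin n)) (x : Fin n → S), p n (x ∘ π) = p n x)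
    {n k : ℕ} (hkn : k ≤ n) (x : Fin k → S) :
    ∃ R : ℝ, 0 ≤ R ∧ R ≤ ((n ^ k - n.descFactorial k : ℕ) : ℝ) ∧
      ∑ y : Fin n → S, p n y * ∏ r : Fin k, cnt (x r) y
        = (n.descFactorial k : ℝ) * Mg p k n x + R := by
  classical
  have hswap : ∑ y : Fin n → S, p n y * ∏ r : Fin k, cnt (x r) y
      = ∑ i : Fin k → Fin n, ∑ y : Fin n → S, p n y * pInd i x y := by
    rw [Finset.sum_comm]
    refine Finset.sum_congr rfl fun y _ => ?_
    rw [← Finset.mul_sum, sum_pInd]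
  set Q := fun i : Fin k → Fin n => ∑ y : Fin n → S, p n y * pInd i x y with hQ
  have hsplit : ∑ i : Fin k → Fin n, Q i
      = ∑ i ∈ univ.filter (fun i : Fin k → Fin n => Function.Injective i), Q i
        + ∑ i ∈ univ.filter (fun i : Fin k → Fin n => ¬ Function.Injective i), Q i :=
    (Finset.sum_filter_add_sum_filter_not _ _ _).symm
  have hinj : ∑ i ∈ univ.filter (fun i : Fin k → Fin n => Function.Injective i), Q i
      = (n.descFactorial k : ℝ) * Mg p k n x := by
    rw [Finset.sum_congr rfl (fun i hi => ?_), Finset.sum_const, card_inj, nsmul_eq_mul]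
    exact Ex_pInd_eq_Mg hsym hkn (Finset.mem_filter.mp hi).2 x
  refine ⟨∑ i ∈ univ.filter (fun i : Fin k → Fin n => ¬ Function.Injective i), Q i,
    Finset.sum_nonneg fun i _ => Ex_pInd_nonneg hnonneg i x, ?_, by
      rw [hswap, hsplit, hinj]⟩
  calc ∑ i ∈ univ.filter (fun i : Fin k → Fin n => ¬ Function.Injective i), Q i
      ≤ ∑ i ∈ univ.filter (fun i : Fin k → Fin n => ¬ Function.Injective i), 1 :=
        Finset.sum_le_sum fun i _ => Ex_pInd_le_one hnonneg hsum i x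
    _ = ((univ.filter (fun i : Fin k → Fin n => ¬ Function.Injective i)).card : ℝ) := by
        rw [Finset.sum_const, nsmul_eq_mul, mul_one]
    _ = ((n ^ k - n.descFactorial k : ℕ) : ℝ) := by
        congr 1
        have h := Finset.card_filter_add_card_filter_not
          (s := (univ : Finset (Fin k → Fin n)))
          (p := fun i : Fin k → Fin n => Function.Injective i)
        rw [card_inj] at h
        have hcard : (univ : Finset (Fin k → Fin n)).card = n ^ k := by
          rw [Finset.card_univ, Fintype.card_fun]
          simp
        omega

lemma fin2_const_of_not_inj {α : Type*} {i : Fin 2 → α} (h : ¬ Function.Injective i) :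
    i 1 = i 0 := by
  by_contra hne
  refine h fun a b hab => ?_
  fin_cases a <;> fin_cases b <;> simp_all

lemma cnt_eq_sum_pInd1 {n : ℕ} (s : S) (y : Fin n → S) :
    cnt s y = ∑ m : Fin n, pInd (fun _ : Fin 1 => m) ![s] y := by
  rw [cnt]
  refine Finset.sum_congr rfl fun m _ => ?_
  simp [pInd, Fin.prod_univ_one]

-- L4a

lemma first_moment {p : (n : ℕ) → (Fin n → S) → ℝ}
    (hsym : ∀ n (π : Equiv.Perm (Fin n)) (x : Fin n → S), p n (x ∘ π) = p n x)
    {n : ℕ} (hn : 1 ≤ n) (s : S) :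
    ∑ y : Fin n → S, p n y * cnt s y = (n : ℝ) * Mg p 1 n ![s] := by
  have h1 : ∑ y : Fin n → S, p n y * cnt s y
      = ∑ m : Fin n, ∑ y : Fin n → S, p n y * pInd (fun _ : Fin 1 => m) ![s] y := by
    rw [Finset.sum_comm]
    refine Finset.sum_congr rfl fun y _ => ?_
    rw [← Finset.mul_sum, ← cnt_eq_sum_pInd1]
  rw [h1, Finset.sum_congr rfl
    (fun m _ => Ex_pInd_eq_Mg hsym hn (fun a b _ => Subsingleton.elim a b) ![s]),
    Finset.sum_const, nsmul_eq_mul, Finset.card_univ, Fintype.card_fin]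

-- L4b

lemma second_moment {p : (n : ℕ) → (Fin n → S) → ℝ}
    (hsym : ∀ n (π : Equiv.Perm (Fin n)) (x : Fin n → S), p n (x ∘ π) = p n x)
    {n : ℕ} (hn : 2 ≤ n) (s : S) :
    ∑ y : Fin n → S, p n y * (cnt s y) ^ 2
      = (n.descFactorial 2 : ℝ) * Mg p 2 n ![s, s] + (n : ℝ) * Mg p 1 n ![s] := by
  classical
  have hn1 : 1 ≤ n := le_trans one_le_two hn
  have h0 : ∀ y : Fin n → S, (cnt s y) ^ 2 = ∏ r : Fin 2, cnt (![s, s] r) y := by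
    intro y; rw [sq]; simp [Fin.prod_univ_two]
  have h1 : ∑ y : Fin n → S, p n y * (cnt s y) ^ 2
      = ∑ i : Fin 2 → Fin n, ∑ y : Fin n → S, p n y * pInd i ![s, s] y := by
    rw [Finset.sum_comm]
    refine Finset.sum_congr rfl fun y _ => ?_
    rw [← Finset.mul_sum, sum_pInd, h0]
  set Q := fun i : Fin 2 → Fin n => ∑ y : Fin n → S, p n y * pInd i ![s, s] y with hQ
  have hsplit : ∑ i : Fin 2 → Fin n, Q i
      = ∑ i ∈ univ.filter (fun i : Fin 2 → Fin n => Function.Injective i), Q i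
        + ∑ i ∈ univ.filter (fun i : Fin 2 → Fin n => ¬ Function.Injective i), Q i :=
    (Finset.sum_filter_add_sum_filter_not _ _ _).symm
  have hinj : ∑ i ∈ univ.filter (fun i : Fin 2 → Fin n => Function.Injective i), Q i
      = (n.descFactorial 2 : ℝ) * Mg p 2 n ![s, s] := by
    rw [Finset.sum_congr rfl (fun i hi =>
        Ex_pInd_eq_Mg hsym hn (Finset.mem_filter.mp hi).2 ![s, s]),
      Finset.sum_const, card_inj, nsmul_eq_mul]
  have hni : ∀ i : Fin 2 → Fin n, ¬ Function.Injective i → Q i = Mg p 1 n ![s] := by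
    intro i hi
    have hii := fin2_const_of_not_inj hi
    have hp : ∀ y : Fin n → S, pInd i ![s, s] y = pInd (fun _ : Fin 1 => i 0) ![s] y := by
      intro y
      simp only [pInd, Fin.prod_univ_two, Fin.prod_univ_one, hii]
      by_cases h : y (i 0) = s <;> simp [h]
    rw [hQ]
    simp only [hp]
    exact Ex_pInd_eq_Mg hsym hn1 (fun a b _ => Subsingleton.elim a b) ![s]
  have hcardni : (univ.filter (fun i : Fin 2 → Fin n => ¬ Function.Injective i)).card = n := by
    have h := Finset.card_filter_add_card_filter_not
      (s := (univ : Finset (Fin 2 → Fin n)))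
      (p := fun i : Fin 2 → Fin n => Function.Injective i)
    rw [card_inj] at h
    have hcard : (univ : Finset (Fin 2 → Fin n)).card = n ^ 2 := by
      rw [Finset.card_univ, Fintype.card_fun]; simp
    rw [hcard] at h
    obtain ⟨m, rfl⟩ : ∃ m, n = m + 1 := ⟨n - 1, by omega⟩
    have hd : (m + 1).descFactorial 2 = m * (m + 1) := by
      simp [Nat.descFactorial]
    rw [hd] at h
    have h2 : (m + 1) ^ 2 = m * (m + 1) + (m + 1) := by ring
    omega
  have hnoninj : ∑ i ∈ univ.filter (fun i : Fin 2 → Fin n => ¬ Function.Injective i), Q i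
      = (n : ℝ) * Mg p 1 n ![s] := by
    rw [Finset.sum_congr rfl (fun i hi => hni i (Finset.mem_filter.mp hi).2),
      Finset.sum_const, hcardni, nsmul_eq_mul]
  rw [h1, hsplit, hinj, hnoninj]

lemma cnt_nonneg {n : ℕ} (s : S) (y : Fin n → S) : 0 ≤ cnt s y :=
  Finset.sum_nonneg fun m _ => by split <;> norm_num

lemma cnt_le {n : ℕ} (s : S) (y : Fin n → S) : cnt s y ≤ (n : ℝ) := by
  calc cnt s y ≤ ∑ _m : Fin n, (1 : ℝ) := by
        refine Finset.sum_le_sum fun m _ => ?_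
        split <;> norm_num
    _ = (n : ℝ) := by simp

lemma M1_eq_sum_M2 (p : (n : ℕ) → (Fin n → S) → ℝ) {n : ℕ} (hn : 2 ≤ n) (s : S) :
    Mg p 1 n ![s] = ∑ t : S, Mg p 2 n ![s, t] := by
  classical
  have hn1 : 1 ≤ n := le_trans one_le_two hn
  rw [Mg, marg_eq p hn1]
  have h2m : ∀ t : S, Mg p 2 n ![s, t]
      = ∑ y : Fin n → S, p n y * pInd (Fin.castLE hn) ![s, t] y := fun t => by
    rw [Mg, marg_eq p hn]
  rw [Finset.sum_congr rfl (fun t _ => h2m t), Finset.sum_comm]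
  refine Finset.sum_congr rfl fun y _ => ?_
  rw [← Finset.mul_sum]
  congr 1
  simp only [pInd, Fin.prod_univ_one, Fin.prod_univ_two, Matrix.cons_val_zero,
    Matrix.cons_val_one, Matrix.head_cons]
  have hc : Fin.castLE hn1 (0 : Fin 1) = Fin.castLE hn (0 : Fin 2) := rfl
  rw [hc]
  by_cases h : y (Fin.castLE hn (0 : Fin 2)) = s <;> simp [h]
  convert (Finset.sum_ite_eq univ (y (Fin.castLE hn 1)) (fun _ => (1 : ℝ))).symm
  · simp
  · congr

lemma M1_tendsto {p : (n : ℕ) → (Fin n → S) → ℝ} {ρ : S → ℝ}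
    (hρsum : ∑ s : S, ρ s = 1)
    (h2 : ∀ x : Fin 2 → S, Tendsto (fun n => Mg p 2 n x) atTop (𝓝 (ρ (x 0) * ρ (x 1))))
    (s : S) : Tendsto (fun n => Mg p 1 n ![s]) atTop (𝓝 (ρ s)) := by
  have hs : Tendsto (fun n => ∑ t : S, Mg p 2 n ![s, t]) atTop (𝓝 (∑ t : S, ρ s * ρ t)) := by
    refine tendsto_finset_sum _ fun t _ => ?_
    simpa using h2 ![s, t]
  have heq : ∑ t : S, ρ s * ρ t = ρ s := by rw [← Finset.mul_sum, hρsum, mul_one]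
  rw [heq] at hs
  exact hs.congr' (by
    filter_upwards [eventually_ge_atTop 2] with n hn
    exact (M1_eq_sum_M2 p hn s).symm)

lemma var_tendsto {p : (n : ℕ) → (Fin n → S) → ℝ} {ρ : S → ℝ}
    (hsum : ∀ n, ∑ x : Fin n → S, p n x = 1)
    (hsym : ∀ n (π : Equiv.Perm (Fin n)) (x : Fin n → S), p n (x ∘ π) = p n x)
    (hρsum : ∑ s : S, ρ s = 1)
    (h2 : ∀ x : Fin 2 → S, Tendsto (fun n => Mg p 2 n x) atTop (𝓝 (ρ (x 0) * ρ (x 1))))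
    (s : S) :
    Tendsto (fun n : ℕ => ∑ y : Fin n → S, p n y * (cnt s y / (n : ℝ) - ρ s) ^ 2)
      atTop (𝓝 0) := by
  have hM1 := M1_tendsto hρsum h2 s
  have hM2' : Tendsto (fun n => Mg p 2 n ![s, s]) atTop (𝓝 (ρ s * ρ s)) := by
    simpa using h2 ![s, s]
  have hD := descFactorial_ratio 2
  have h1n : Tendsto (fun n : ℕ => 1 / (n : ℝ)) atTop (𝓝 0) :=
    tendsto_one_div_atTop_nhds_zero_nat
  have hcomb : Tendsto
      (fun n : ℕ => (n.descFactorial 2 : ℝ) / (n : ℝ) ^ 2 * Mg p 2 n ![s, s]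
        + (1 / (n : ℝ)) * Mg p 1 n ![s] - 2 * ρ s * Mg p 1 n ![s] + ρ s ^ 2)
      atTop (𝓝 (1 * (ρ s * ρ s) + 0 * ρ s - 2 * ρ s * ρ s + ρ s ^ 2)) :=
    (((hD.mul hM2').add (h1n.mul hM1)).sub (tendsto_const_nhds.mul hM1)).add tendsto_const_nhds
  have hz : 1 * (ρ s * ρ s) + 0 * ρ s - 2 * ρ s * ρ s + ρ s ^ 2 = 0 := by ring
  rw [hz] at hcomb
  refine hcomb.congr' ?_
  filter_upwards [eventually_ge_atTop 2] with n hn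
  have hn1 : 1 ≤ n := le_trans one_le_two hn
  have hn0 : (n : ℝ) ≠ 0 := by
    simpa using Nat.one_le_iff_ne_zero.mp hn1
  have e1 : ∀ y : Fin n → S, p n y * (cnt s y / (n : ℝ) - ρ s) ^ 2
      = (1 / (n : ℝ) ^ 2) * (p n y * cnt s y ^ 2)
        - (2 * ρ s / (n : ℝ)) * (p n y * cnt s y) + ρ s ^ 2 * p n y := by
    intro y; field_simp; ring
  rw [show (∑ y : Fin n → S, p n y * (cnt s y / (n : ℝ) - ρ s) ^ 2)
      = ∑ y : Fin n → S, ((1 / (n : ℝ) ^ 2) * (p n y * cnt s y ^ 2)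
        - (2 * ρ s / (n : ℝ)) * (p n y * cnt s y) + ρ s ^ 2 * p n y) from
    Finset.sum_congr rfl fun y _ => e1 y, Finset.sum_add_distrib, Finset.sum_sub_distrib,
    ← Finset.mul_sum, ← Finset.mul_sum, ← Finset.mul_sum, second_moment hsym hn s,
    first_moment hsym hn1 s, hsum n]
  field_simp

lemma abs_dev_tendsto {p : (n : ℕ) → (Fin n → S) → ℝ} {ρ : S → ℝ}
    (hnonneg : ∀ n x, 0 ≤ p n x)
    (hsum : ∀ n, ∑ x : Fin n → S, p n x = 1)
    (hsym : ∀ n (π : Equiv.Perm (Fin n)) (x : Fin n → S), p n (x ∘ π) = p n x)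
    (hρsum : ∑ s : S, ρ s = 1)
    (h2 : ∀ x : Fin 2 → S, Tendsto (fun n => Mg p 2 n x) atTop (𝓝 (ρ (x 0) * ρ (x 1))))
    (s : S) :
    Tendsto (fun n : ℕ => ∑ y : Fin n → S, p n y * |cnt s y / (n : ℝ) - ρ s|)
      atTop (𝓝 0) := by
  have hV := var_tendsto hsum hsym hρsum h2 s
  have hVs : Tendsto (fun n : ℕ =>
      Real.sqrt (∑ y : Fin n → S, p n y * (cnt s y / (n : ℝ) - ρ s) ^ 2)) atTop (𝓝 0) := by
    simpa using hV.sqrt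
  refine squeeze_zero (fun n => ?_) (fun n => ?_) hVs
  · exact Finset.sum_nonneg fun y _ => mul_nonneg (hnonneg n y) (abs_nonneg _)
  · refine Real.le_sqrt_of_sq_le ?_
    calc (∑ y : Fin n → S, p n y * |cnt s y / (n : ℝ) - ρ s|) ^ 2
        = (∑ y : Fin n → S,
            Real.sqrt (p n y) * (Real.sqrt (p n y) * |cnt s y / (n : ℝ) - ρ s|)) ^ 2 := by
          congr 1
          refine Finset.sum_congr rfl fun y _ => ?_
          rw [← mul_assoc, Real.mul_self_sqrt (hnonneg n y)]
      _ ≤ (∑ y : Fin n → S, Real.sqrt (p n y) ^ 2)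
            * ∑ y : Fin n → S, (Real.sqrt (p n y) * |cnt s y / (n : ℝ) - ρ s|) ^ 2 :=
          Finset.sum_mul_sq_le_sq_mul_sq _ _ _
      _ = ∑ y : Fin n → S, p n y * (cnt s y / (n : ℝ) - ρ s) ^ 2 := by
          rw [show ∑ y : Fin n → S, Real.sqrt (p n y) ^ 2 = ∑ y : Fin n → S, p n y from
              Finset.sum_congr rfl fun y _ => Real.sq_sqrt (hnonneg n y), hsum n, one_mul]
          refine Finset.sum_congr rfl fun y _ => ?_
          rw [mul_pow, Real.sq_sqrt (hnonneg n y), sq_abs]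


end chaosAux

/-- If symmetric probability measures `ρ_n` on `S^n` (for a finite set `S`) have
two-dimensional marginals converging to a product `ρ ⊗ ρ`, then for every `k` the
`k`-dimensional marginals converge to `ρ^⊗k`; i.e. `(ρ_n)` is `ρ`-chaotic. -/

theorem stmt_11 (S : Type*) [Fintype S] [DecidableEq S]
    (p : (n : ℕ) → (Fin n → S) → ℝ) (ρ : S → ℝ)
    (hnonneg : ∀ n x, 0 ≤ p n x)
    (hsum : ∀ n, ∑ x : Fin n → S, p n x = 1)
    (hsym : ∀ n (π : Equiv.Perm (Fin n)) (x : Fin n → S), p n (x ∘ π) = p n x)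
    (hρnonneg : ∀ s, 0 ≤ ρ s) (hρsum : ∑ s : S, ρ s = 1)
    (h2 : ∀ x : Fin 2 → S,
      Tendsto (fun n => ∑ y ∈ univ.filter
            (fun y : Fin n → S => ∀ i : Fin n, (h : (i : ℕ) < 2) → y i = x ⟨i, h⟩),
          p n y)
        atTop (𝓝 (ρ (x 0) * ρ (x 1)))) :
    ∀ (k : ℕ) (x : Fin k → S),
      Tendsto (fun n => ∑ y ∈ univ.filter
            (fun y : Fin n → S => ∀ i : Fin n, (h : (i : ℕ) < k) → y i = x ⟨i, h⟩),
          p n y)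
        atTop (𝓝 (∏ r : Fin k, ρ (x r))) := by
  classical
  intro k x
  have h2' : ∀ x : Fin 2 → S,
      Tendsto (fun n => Mg p 2 n x) atTop (𝓝 (ρ (x 0) * ρ (x 1))) := h2
  show Tendsto (fun n => Mg p k n x) atTop (𝓝 (∏ r : Fin k, ρ (x r)))
  set L := ∏ r : Fin k, ρ (x r) with hL
  have hρ1 : ∀ s, ρ s ≤ 1 := fun s => by
    calc ρ s ≤ ∑ t : S, ρ t :=
          Finset.single_le_sum (fun t _ => hρnonneg t) (Finset.mem_univ s)
      _ = 1 := hρsum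
  have hA := fun r : Fin k => abs_dev_tendsto hnonneg hsum hsym hρsum h2' (x r)
  have hDk := descFactorial_ratio k
  set g : ℕ → ℝ := fun n => 2 * (1 - (n.descFactorial k : ℝ) / (n : ℝ) ^ k)
      + ∑ r : Fin k, ∑ y : Fin n → S, p n y * |cnt (x r) y / (n : ℝ) - ρ (x r)| with hg
  have hglim : Tendsto g atTop (𝓝 0) := by
    have h : Tendsto (fun n : ℕ => 2 * (1 - (n.descFactorial k : ℝ) / (n : ℝ) ^ k)
        + ∑ r : Fin k, ∑ y : Fin n → S, p n y * |cnt (x r) y / (n : ℝ) - ρ (x r)|)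
        atTop (𝓝 (2 * (1 - 1) + ∑ _r : Fin k, (0 : ℝ))) :=
      (Tendsto.mul tendsto_const_nhds (Tendsto.sub tendsto_const_nhds hDk)).add
        (tendsto_finset_sum univ fun r _ => hA r)
    rw [hg]
    simpa using h
  have hbound : ∀ᶠ n : ℕ in atTop, ‖Mg p k n x - L‖ ≤ g n := by
    filter_upwards [eventually_ge_atTop (max k 1)] with n hn
    have hkn : k ≤ n := le_trans (le_max_left _ _) hn
    have hn1 : 1 ≤ n := le_trans (le_max_right _ _) hn
    have hnpos : (0 : ℝ) < (n : ℝ) := by exact_mod_cast hn1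
    have hn0 : (n : ℝ) ≠ 0 := ne_of_gt hnpos
    have hNpos : (0 : ℝ) < (n : ℝ) ^ k := by positivity
    obtain ⟨R, hR0, hRle, hT⟩ := key_split hnonneg hsum hsym hkn x
    set D := (n.descFactorial k : ℝ) with hD
    set N := ((n : ℝ)) ^ k with hN
    have hDN : D ≤ N := by
      calc D ≤ ((n ^ k : ℕ) : ℝ) := Nat.cast_le.mpr (Nat.descFactorial_le_pow n k)
        _ = N := by rw [hN]; push_cast; ring
    have hRle' : R ≤ N - D := by
      refine le_trans hRle (le_of_eq ?_)
      rw [Nat.cast_sub (Nat.descFactorial_le_pow n k), hN, hD]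
      push_cast; ring
    set G := ∑ y : Fin n → S, p n y * ∏ r : Fin k, (cnt (x r) y / (n : ℝ)) with hGdef
    have hGT : G = (∑ y : Fin n → S, p n y * ∏ r : Fin k, cnt (x r) y) / N := by
      rw [hGdef, Finset.sum_div]
      refine Finset.sum_congr rfl fun y _ => ?_
      rw [mul_div_assoc]
      congr 1
      rw [Finset.prod_div_distrib]
      congr 1
      rw [hN]; simp
    have hM0 := Mg_nonneg (p := p) hnonneg (k := k) (n := n) x
    have hM1' := Mg_le_one (p := p) hnonneg hsum (k := k) (n := n) x
    set M := Mg p k n x with hM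
    have hMG : |M - G| ≤ 1 - D / N := by
      rw [hGT, hT]
      have hrw : M - (D * M + R) / N = ((N - D) * M - R) / N := by
        field_simp; ring
      rw [hrw, abs_div, abs_of_pos hNpos]
      have habs : |(N - D) * M - R| ≤ N - D := by
        rw [abs_le]
        constructor <;> nlinarith
      calc |(N - D) * M - R| / N ≤ (N - D) / N := by gcongr
        _ = 1 - D / N := by field_simp
    have hGL : |G - L| ≤ ∑ r : Fin k, ∑ y : Fin n → S,
        p n y * |cnt (x r) y / (n : ℝ) - ρ (x r)| := by
      have h1 : G - L = ∑ y : Fin n → S,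
          p n y * (∏ r : Fin k, (cnt (x r) y / (n : ℝ)) - L) := by
        rw [show (∑ y : Fin n → S, p n y * (∏ r : Fin k, (cnt (x r) y / (n : ℝ)) - L))
            = ∑ y : Fin n → S, (p n y * ∏ r : Fin k, (cnt (x r) y / (n : ℝ)) - p n y * L)
          from Finset.sum_congr rfl fun y _ => mul_sub _ _ _,
          Finset.sum_sub_distrib, ← Finset.sum_mul, hsum n, one_mul, hGdef]
      rw [h1]
      calc |∑ y : Fin n → S, p n y * (∏ r : Fin k, (cnt (x r) y / (n : ℝ)) - L)|
          ≤ ∑ y : Fin n → S, |p n y * (∏ r : Fin k, (cnt (x r) y / (n : ℝ)) - L)| :=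
            Finset.abs_sum_le_sum_abs _ _
        _ = ∑ y : Fin n → S, p n y * |∏ r : Fin k, (cnt (x r) y / (n : ℝ)) - L| := by
            refine Finset.sum_congr rfl fun y _ => ?_
            rw [abs_mul, abs_of_nonneg (hnonneg n y)]
        _ ≤ ∑ y : Fin n → S, p n y
              * ∑ r : Fin k, |cnt (x r) y / (n : ℝ) - ρ (x r)| := by
            refine Finset.sum_le_sum fun y _ => ?_
            refine mul_le_mul_of_nonneg_left ?_ (hnonneg n y)
            rw [hL]
            exact abs_prod_sub_prod_le univ _ _
              (fun r => div_nonneg (cnt_nonneg _ _) (le_of_lt hnpos))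
              (fun r => (div_le_one hnpos).mpr (cnt_le _ _))
              (fun r => hρnonneg (x r)) (fun r => hρ1 (x r))
        _ = ∑ r : Fin k, ∑ y : Fin n → S,
              p n y * |cnt (x r) y / (n : ℝ) - ρ (x r)| := by
            rw [show (∑ y : Fin n → S, p n y
                  * ∑ r : Fin k, |cnt (x r) y / (n : ℝ) - ρ (x r)|)
                = ∑ y : Fin n → S, ∑ r : Fin k,
                    p n y * |cnt (x r) y / (n : ℝ) - ρ (x r)|
              from Finset.sum_congr rfl fun y _ => Finset.mul_sum _ _ _]
            exact Finset.sum_comm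
    have hfrac : D / N ≤ 1 := (div_le_one hNpos).mpr hDN
    calc ‖M - L‖ = |M - L| := Real.norm_eq_abs _
      _ ≤ |M - G| + |G - L| := abs_sub_le M G L
      _ ≤ (1 - D / N) + ∑ r : Fin k, ∑ y : Fin n → S,
            p n y * |cnt (x r) y / (n : ℝ) - ρ (x r)| := add_le_add hMG hGL
      _ ≤ g n := by
          rw [hg]
          have : (1 : ℝ) - D / N ≤ 2 * (1 - D / N) := by linarith
          exact add_le_add this (le_refl _)
  have hfin : Tendsto (fun n => Mg p k n x - L) atTop (𝓝 0) :=
    squeeze_zero_norm' hbound hglim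
  have hfin2 := hfin.add (tendsto_const_nhds (x := L) (f := atTop))
  simpa using hfin2
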